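/- Let Λ₁ : L⁰(ℝᴺ) → L⁰(ℝ) be increasing and concave, (B^x)_{x∈ℝ} an increasing (in x) family of monotone convex subsets of L⁰(ℝ), and θ : C → ℝ. Define A^Y := {Z ∈ L⁰(ℝᴺ) | Λ₁(Z) ∈ B^{θ(Y)}}. Then each A^Y is monotone and property (P2a) holds: for all Y₁, Y₂ ∈ C, X₁ ∈ A^{Y₁}, X₂ ∈ A^{Y₂}, λ ∈ [0,1], there exists α ∈ [0,1] such that λX₁+(1−λ)X₂ ∈ A^{αY₁+(1−α)Y₂}. -/

import Mathlib

open MeasureTheory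

/-- with `Λ₁` increasing and concave, `(B^x)` an increasing family of
monotone convex acceptance sets and `θ : C → ℝ`, the sets
`A^Y = {Z | Λ₁(Z) ∈ B^{θ(Y)}}` are monotone and satisfy property (P2a). -/
theorem stmt7 {Ω : Type*} [MeasureSpace Ω] {N : ℕ}
    (C : Set (Ω → Fin N → ℝ))
    (Λ₁ : (Ω → Fin N → ℝ) → (Ω → ℝ))
    (hΛinc : ∀ X₁ X₂ : Ω → Fin N → ℝ,
      (∀ᵐ ω, ∀ i, X₁ ω i ≤ X₂ ω i) → ∀ᵐ ω, Λ₁ X₁ ω ≤ Λ₁ X₂ ω)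
    (hΛconc : ∀ X₁ X₂ : Ω → Fin N → ℝ, ∀ l : ℝ, 0 ≤ l → l ≤ 1 →
      ∀ᵐ ω, l * Λ₁ X₁ ω + (1 - l) * Λ₁ X₂ ω ≤ Λ₁ (l • X₁ + (1 - l) • X₂) ω)
    (B : ℝ → Set (Ω → ℝ))
    (hBinc : ∀ x₁ x₂ : ℝ, x₁ ≤ x₂ → B x₁ ⊆ B x₂)
    (hBmono : ∀ x : ℝ, ∀ Z ∈ B x, ∀ Z' : Ω → ℝ, (∀ᵐ ω, Z ω ≤ Z' ω) → Z' ∈ B x)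
    (hBconv : ∀ x : ℝ, Convex ℝ (B x))
    (θ : (Ω → Fin N → ℝ) → ℝ) :
    (∀ Y ∈ C, ∀ X₁ : Ω → Fin N → ℝ, Λ₁ X₁ ∈ B (θ Y) →
      ∀ X₂ : Ω → Fin N → ℝ, (∀ᵐ ω, ∀ i, X₁ ω i ≤ X₂ ω i) → Λ₁ X₂ ∈ B (θ Y))
    ∧ (∀ Y₁ ∈ C, ∀ Y₂ ∈ C, ∀ X₁ : Ω → Fin N → ℝ, Λ₁ X₁ ∈ B (θ Y₁) →
        ∀ X₂ : Ω → Fin N → ℝ, Λ₁ X₂ ∈ B (θ Y₂) → ∀ l : ℝ, 0 ≤ l → l ≤ 1 →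
          ∃ a : ℝ, 0 ≤ a ∧ a ≤ 1 ∧
            Λ₁ (l • X₁ + (1 - l) • X₂) ∈ B (θ (a • Y₁ + (1 - a) • Y₂))) := by
  constructor
  · intro Y _ X₁ h1 X₂ hle
    exact hBmono _ _ h1 _ (hΛinc X₁ X₂ hle)
  · intro Y₁ _ Y₂ _ X₁ h1 X₂ h2 l hl0 hl1
    rcases le_total (θ Y₁) (θ Y₂) with h | h
    · refine ⟨0, le_refl 0, zero_le_one, ?_⟩
      have hY : (0:ℝ) • Y₁ + (1 - 0 : ℝ) • Y₂ = Y₂ := by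
        simp
      rw [hY]
      have hmem : (fun ω => l * Λ₁ X₁ ω + (1 - l) * Λ₁ X₂ ω) ∈ B (θ Y₂) := by
        have := (hBconv (θ Y₂)) (hBinc _ _ h h1) h2 (a := l) (b := 1 - l) hl0 (by linarith) (by ring)
        convert this using 1
        rfl
      exact hBmono _ _ hmem _ (hΛconc X₁ X₂ l hl0 hl1)
    · refine ⟨1, zero_le_one, le_refl 1, ?_⟩
      have hY : (1:ℝ) • Y₁ + (1 - 1 : ℝ) • Y₂ = Y₁ := by
        simp
      rw [hY]
      have hmem : (fun ω => l * Λ₁ X₁ ω + (1 - l) * Λ₁ X₂ ω) ∈ B (θ Y₁) := by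
        have := (hBconv (θ Y₁)) h1 (hBinc _ _ h h2) (a := l) (b := 1 - l) hl0 (by linarith) (by ring)
        convert this using 1
        rfl
      exact hBmono _ _ hmem _ (hΛconc X₁ X₂ l hl0 hl1)
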